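/- For every natural number T and every finite sequence of real numbers a_0, …, a_T with a_0 ≥ 1 and a_t ≥ 0 for all t, one has Σ_{t=0}^T a_t / (Σ_{i=0}^t a_i) ≤ log(Σ_{t=0}^T a_t) + 1. -/

import Mathlib

open Finset

/-- For every natural number `T` and every finite sequence of reals `a 0, …, a T`
with `a 0 ≥ 1` and `a t ≥ 0` for all `t`, one has
`Σ_{t=0}^T a t / (Σ_{i=0}^t a i) ≤ log(Σ_{t=0}^T a t) + 1`. -/
theorem stmt_1 (T : ℕ) (a : ℕ → ℝ) (ha0 : 1 ≤ a 0) (ha : ∀ t, t ≤ T → 0 ≤ a t) :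
    (∑ t ∈ range (T + 1), a t / (∑ i ∈ range (t + 1), a i)) ≤
      Real.log (∑ t ∈ range (T + 1), a t) + 1 := by
  induction T with
  | zero =>
    have h0 : (0:ℝ) < a 0 := lt_of_lt_of_le one_pos ha0
    simp only [zero_add, Finset.sum_range_one]
    rw [div_self (ne_of_gt h0)]
    have := Real.log_nonneg ha0
    linarith
  | succ T IH =>
    have haT : ∀ t, t ≤ T → 0 ≤ a t := fun t ht => ha t (ht.trans (Nat.le_succ T))
    have IH' := IH haT
    set S : ℝ := ∑ t ∈ range (T + 1), a t with hS
    have hS1 : (1:ℝ) ≤ S := by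
      calc (1:ℝ) ≤ a 0 := ha0
        _ ≤ S := by
          apply Finset.single_le_sum (f := a) (fun i hi => haT i (Nat.lt_succ_iff.mp (mem_range.mp hi)))
          simp
    have hSpos : (0:ℝ) < S := lt_of_lt_of_le one_pos hS1
    have haT1 : 0 ≤ a (T + 1) := ha (T + 1) le_rfl
    have hS'pos : (0:ℝ) < S + a (T + 1) := by linarith
    rw [Finset.sum_range_succ, Finset.sum_range_succ (f := a), ← hS]
    have key : a (T + 1) / (S + a (T + 1)) ≤ Real.log (S + a (T + 1)) - Real.log S := by
      have h1 := Real.log_le_sub_one_of_pos (div_pos hSpos hS'pos)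
      rw [Real.log_div (ne_of_gt hSpos) (ne_of_gt hS'pos)] at h1
      have h2 : S / (S + a (T + 1)) - 1 = -(a (T + 1) / (S + a (T + 1))) := by
        field_simp
        ring
      linarith
    linarith
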